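/- Let G be a beer graph satisfying the generalized triangle inequality, let s, c, a, b be vertices such that (a,c) and (b,c) are edges of G and every walk in G from s to c visits a or b. Then dist_B(s,c) is the minimum of the four quantities: dist(s,a) + dist_B(a,c); dist_B(s,a) + ω(a,c); dist(s,b) + dist_B(b,c); and dist_B(s,b) + ω(b,c). -/
import Mathlib


open scoped ENNReal

/-- The weight of a walk: the sum, with multiplicity, of the weights of its edges. -/
noncomputable def walkWeight {V : Type*} (ω : V → V → ℝ≥0∞) {G : SimpleGraph V}
    {u v : V} (p : G.Walk u v) : ℝ≥0∞ :=
  (p.darts.map fun d => ω d.toProd.1 d.toProd.2).sum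

/-- The (weighted) distance: the infimum in ℝ≥0∞ of the weights of all walks. -/
noncomputable def gDist {V : Type*} (G : SimpleGraph V) (ω : V → V → ℝ≥0∞) (u v : V) : ℝ≥0∞ :=
  ⨅ p : G.Walk u v, walkWeight ω p

/-- The beer distance: the infimum in ℝ≥0∞ of the weights of all walks visiting
a vertex of `B`. -/
noncomputable def beerDist {V : Type*} (G : SimpleGraph V) (ω : V → V → ℝ≥0∞)
    (B : Set V) (u v : V) : ℝ≥0∞ :=
  ⨅ (p : G.Walk u v) (_ : ∃ b ∈ B, b ∈ p.support), walkWeight ω p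

section Aux

variable {V : Type*} {G : SimpleGraph V} (ω : V → V → ℝ≥0∞) (B : Set V)

lemma walkWeight_append {u v w : V} (p : G.Walk u v) (q : G.Walk v w) :
    walkWeight ω (p.append q) = walkWeight ω p + walkWeight ω q := by
  simp [walkWeight, SimpleGraph.Walk.darts_append]

lemma gDist_le_walkWeight {u v : V} (p : G.Walk u v) :
    gDist G ω u v ≤ walkWeight ω p := iInf_le _ p

lemma beerDist_le_walkWeight {u v : V} (p : G.Walk u v)
    (h : ∃ b ∈ B, b ∈ p.support) :
    beerDist G ω B u v ≤ walkWeight ω p := iInf₂_le p h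

lemma le_iInf_add_iInf' {ι κ : Sort*} {f : ι → ℝ≥0∞} {g : κ → ℝ≥0∞} {d : ℝ≥0∞}
    (h : ∀ i j, d ≤ f i + g j) : d ≤ iInf f + iInf g := by
  rw [ENNReal.iInf_add]
  refine le_iInf fun i => ?_
  rw [ENNReal.add_iInf]
  exact le_iInf (h i)

/-- beerDist s c ≤ gDist s m + beerDist m c -/
lemma beerDist_le_gDist_add_beerDist (s m c : V) :
    beerDist G ω B s c ≤ gDist G ω s m + beerDist G ω B m c := by
  refine le_iInf_add_iInf' fun p q => ?_
  by_cases hq : ∃ b ∈ B, b ∈ q.support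
  · rw [iInf_pos hq, ← walkWeight_append]
    refine beerDist_le_walkWeight ω B _ ?_
    obtain ⟨b₀, hb₀B, hb₀⟩ := hq
    exact ⟨b₀, hb₀B, by rw [SimpleGraph.Walk.mem_support_append_iff]; exact Or.inr hb₀⟩
  · simp [iInf_neg hq]

/-- beerDist s c ≤ beerDist s m + ω m c when m ~ c -/
lemma beerDist_le_beerDist_add_edge (s m c : V) (hmc : G.Adj m c) :
    beerDist G ω B s c ≤ beerDist G ω B s m + ω m c := by
  have key : ∀ p : G.Walk s m, (∃ b ∈ B, b ∈ p.support) →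
      beerDist G ω B s c ≤ walkWeight ω p + ω m c := by
    intro p hp
    have hw : walkWeight ω (p.append (SimpleGraph.Walk.cons hmc SimpleGraph.Walk.nil)) =
        walkWeight ω p + ω m c := by
      rw [walkWeight_append]; simp [walkWeight]
    rw [← hw]
    refine beerDist_le_walkWeight ω B _ ?_
    obtain ⟨b₀, hb₀B, hb₀⟩ := hp
    exact ⟨b₀, hb₀B, by rw [SimpleGraph.Walk.mem_support_append_iff]; exact Or.inl hb₀⟩
  conv_rhs => rw [beerDist, ENNReal.iInf_add]
  refine le_iInf fun p => ?_
  by_cases hp : ∃ b ∈ B, b ∈ p.support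
  · rw [iInf_pos hp]
    exact key p hp
  · simp [iInf_neg hp]

end Aux

/-- In a beer graph satisfying the generalized triangle inequality,
if (a,c) and (b,c) are edges and every walk from s to c visits a or b, then the
beer distance from s to c is the minimum of the four listed quantities. -/
theorem beerDist_single_source_recurrence {V : Type*} [Fintype V] [DecidableEq V]
    (G : SimpleGraph V) (ω : V → V → ℝ≥0∞) (B : Set V)
    (hsymm : ∀ a b, ω a b = ω b a)
    (hpos : ∀ a b, G.Adj a b → 0 < ω a b ∧ ω a b < ⊤)
    (hgti : ∀ a b, G.Adj a b → gDist G ω a b = ω a b)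
    (s c a b : V)
    (hac : G.Adj a c) (hbc : G.Adj b c)
    (hvisit : ∀ p : G.Walk s c, a ∈ p.support ∨ b ∈ p.support) :
    beerDist G ω B s c =
      min (min (gDist G ω s a + beerDist G ω B a c) (beerDist G ω B s a + ω a c))
          (min (gDist G ω s b + beerDist G ω B b c) (beerDist G ω B s b + ω b c)) := by
  refine le_antisymm ?_ ?_
  · refine le_min (le_min ?_ ?_) (le_min ?_ ?_)
    · exact beerDist_le_gDist_add_beerDist ω B s a c
    · exact beerDist_le_beerDist_add_edge ω B s a c hac
    · exact beerDist_le_gDist_add_beerDist ω B s b c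
    · exact beerDist_le_beerDist_add_edge ω B s b c hbc
  · -- ≥ direction: every beer walk's weight dominates the min
    refine le_iInf₂ fun p hp => ?_
    obtain ⟨b₀, hb₀B, hb₀⟩ := hp
    have main : ∀ m : V, G.Adj m c → (hm : m ∈ p.support) →
        (gDist G ω s m + beerDist G ω B m c ≤ walkWeight ω p ∨
         beerDist G ω B s m + ω m c ≤ walkWeight ω p) := by
      intro m hmc hm
      set p₁ := p.takeUntil m hm with hp₁
      set p₂ := p.dropUntil m hm with hp₂
      have hsplit : p₁.append p₂ = p := p.take_spec hm
      have hw : walkWeight ω p = walkWeight ω p₁ + walkWeight ω p₂ := by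
        rw [← hsplit, walkWeight_append]
      have hb₀' : b₀ ∈ p₁.support ∨ b₀ ∈ p₂.support := by
        rw [← SimpleGraph.Walk.mem_support_append_iff, hsplit]; exact hb₀
      rcases hb₀' with h1 | h2
      · right
        rw [hw]
        refine add_le_add (beerDist_le_walkWeight ω B p₁ ⟨b₀, hb₀B, h1⟩) ?_
        rw [← hgti m c hmc]
        exact gDist_le_walkWeight ω p₂
      · left
        rw [hw]
        exact add_le_add (gDist_le_walkWeight ω p₁)
          (beerDist_le_walkWeight ω B p₂ ⟨b₀, hb₀B, h2⟩)
    rcases hvisit p with ha | hb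
    · rcases main a hac ha with h | h
      · exact le_trans (min_le_left _ _) (le_trans (min_le_left _ _) h)
      · exact le_trans (min_le_left _ _) (le_trans (min_le_right _ _) h)
    · rcases main b hbc hb with h | h
      · exact le_trans (min_le_right _ _) (le_trans (min_le_left _ _) h)
      · exact le_trans (min_le_right _ _) (le_trans (min_le_right _ _) h)
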